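/- arXiv:2009.13254 — 2 statements merged into one kernel-verified Lean document; each statement's English description precedes it below -/
import Mathlib

section
/- For all real numbers s > 0, the quadratic polynomial P(s;u) = u^2 - (s+1+ρ+q)u + sq + ρ + q has two distinct real roots U⁻(s) and U⁺(s) satisfying q < U⁻(s) < 1 < U⁺(s). -/
theorem stmt0 (ρ q : ℝ) (hρ : 0 < ρ) (hq : q ∈ Set.Ioo (0:ℝ) 1)
    (hstab : 0 < 1 - ρ - q) :
    ∀ s : ℝ, 0 < s → ∃ Um Up : ℝ,
      Um ^ 2 - (s + 1 + ρ + q) * Um + s * q + ρ + q = 0 ∧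
      Up ^ 2 - (s + 1 + ρ + q) * Up + s * q + ρ + q = 0 ∧
      q < Um ∧ Um < 1 ∧ 1 < Up := by
  obtain ⟨hq0, hq1⟩ := hq
  intro s hs
  set b : ℝ := s + 1 + ρ + q with hb
  set c : ℝ := s * q + ρ + q with hc
  have hD : 0 < b ^ 2 - 4 * c := by nlinarith [sq_nonneg (b - 2), mul_pos hs (by linarith : (0:ℝ) < 1 - q)]
  set r : ℝ := Real.sqrt (b ^ 2 - 4 * c) with hrdef
  have hr2 : r ^ 2 = b ^ 2 - 4 * c := Real.sq_sqrt hD.le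
  have hrpos : 0 < r := Real.sqrt_pos.mpr hD
  refine ⟨(b - r) / 2, (b + r) / 2, by nlinarith [hr2], by nlinarith [hr2], ?_, ?_, ?_⟩
  · -- q < Um : need r < b - 2q, with (b-2q)^2 - r^2 = 4 P(q) = 4 ρ (1-q) > 0
    have h1 : 0 < b - 2 * q := by simp [hb]; linarith
    have h2 : r < b - 2 * q := by nlinarith [hr2, hrpos]
    linarith
  · -- Um < 1 : need r > b - 2, with r^2 - (b-2)^2 = 4 s (1-q) > 0
    have h2 : b - 2 < r := by nlinarith [hr2, hrpos]
    linarith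
  · -- 1 < Up
    have h2 : 2 - b < r := by nlinarith [hr2, hrpos]
    linarith
end

section
/- Suppose for each n ≥ 0 and b ≥ 1 the real numbers e*_{n,b}(s) ∈ [0,1] satisfy the recurrence (s+ρ+1)(n+b) e*_{n,b} = (b e*_{n,b-1} 1_{b≥2} + 1_{b=1}) + n e*_{n-1,b} + ρ(n+b)(1-q) ∑_{m≥1} q^{m-1} e*_{n+m,b}, with e*_{-1,b} = 0. Then the generating functions E_b(u) = ∑_{n≥0} e*_{n,b}(s) u^n (absolutely convergent for |u| < 1) satisfy, for b = 1 and u ∈ (q,1): (u P(u)/(u-q)) E₁'(u) + (u - (1+ρ+s)) E₁(u) + ρ(1-q)(E₁(u) - E₁(q))/(u-q) - uρ(1-q)(E₁(u) - E₁(q))/(u-q)² + 1/(1-u) = 0, where P(u) = u² - (s+1+ρ+q)u + sq + ρ + q. -/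
open Set Filter

lemma summable_ps {a : ℕ → ℝ} {C x : ℝ} (hC : ∀ n, |a n| ≤ C) (hx : |x| < 1) :
    Summable (fun n => a n * x ^ n) := by
  apply Summable.of_norm_bounded (g := fun n => C * |x| ^ n)
    ((summable_geometric_of_lt_one (abs_nonneg x) hx).mul_left C)
  intro n
  rw [Real.norm_eq_abs, abs_mul, abs_pow]
  exact mul_le_mul_of_nonneg_right (hC n) (pow_nonneg (abs_nonneg x) n)

lemma summable_nps {r : ℝ} (hr : 0 ≤ r) (hr1 : r < 1) :
    Summable (fun n : ℕ => (n : ℝ) * r ^ (n - 1)) := by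
  rw [← summable_nat_add_iff 1]
  have h : ∀ n : ℕ, ((n + 1 : ℕ) : ℝ) * r ^ ((n + 1) - 1) = (n : ℝ) * r ^ n + r ^ n := by
    intro n; push_cast; ring
  simp only [h]
  have hn : ‖r‖ < 1 := by rwa [Real.norm_eq_abs, abs_of_nonneg hr]
  exact Summable.add (by simpa using summable_pow_mul_geometric_of_norm_lt_one 1 hn)
    (summable_geometric_of_lt_one hr hr1)

lemma summable_dps {a : ℕ → ℝ} {C x : ℝ} (hC : ∀ n, |a n| ≤ C) (hx : |x| < 1) :
    Summable (fun n : ℕ => a n * ((n : ℝ) * x ^ (n - 1))) := by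
  have hC0 : 0 ≤ C := le_trans (abs_nonneg _) (hC 0)
  apply Summable.of_norm_bounded (g := fun n : ℕ => C * ((n : ℝ) * |x| ^ (n - 1)))
    (((summable_nps (abs_nonneg x) hx)).mul_left C)
  intro n
  rw [Real.norm_eq_abs, abs_mul, abs_mul, abs_pow, abs_of_nonneg (Nat.cast_nonneg (α := ℝ) n)]
  gcongr
  exact hC n

lemma summable_n1ps {a : ℕ → ℝ} {C x : ℝ} (hC : ∀ n, |a n| ≤ C) (hx : |x| < 1) :
    Summable (fun n : ℕ => ((n : ℝ) + 1) * a n * x ^ n) := by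
  have hC0 : 0 ≤ C := le_trans (abs_nonneg _) (hC 0)
  have hs : Summable (fun n : ℕ => C * (((n : ℝ) + 1) * |x| ^ n)) := by
    apply Summable.mul_left
    have hn : ‖|x|‖ < 1 := by rwa [Real.norm_eq_abs, abs_abs]
    have := (summable_pow_mul_geometric_of_norm_lt_one 1 hn).add
      (summable_geometric_of_lt_one (abs_nonneg x) hx)
    apply this.congr
    intro n; push_cast; ring
  apply Summable.of_norm_bounded hs
  intro n
  rw [Real.norm_eq_abs, abs_mul, abs_mul, abs_pow,
    abs_of_nonneg (by positivity : (0:ℝ) ≤ (n:ℝ) + 1)]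
  rw [show ((n:ℝ) + 1) * |a n| * |x| ^ n = |a n| * (((n:ℝ) + 1) * |x| ^ n) from by ring]
  have h2 : (0:ℝ) ≤ ((n:ℝ) + 1) * |x| ^ n := by positivity
  exact mul_le_mul_of_nonneg_right (hC n) h2

lemma hasDerivAt_ps {a : ℕ → ℝ} {C : ℝ} (hC : ∀ n, |a n| ≤ C) {x : ℝ} (hx : |x| < 1) :
    HasDerivAt (fun y => ∑' n, a n * y ^ n) (∑' n : ℕ, a n * (n * x ^ (n - 1))) x := by
  have hC0 : 0 ≤ C := le_trans (abs_nonneg _) (hC 0)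
  set r : ℝ := (|x| + 1) / 2 with hr
  have hr0 : 0 ≤ r := by positivity
  have hxr : |x| < r := by rw [hr]; linarith
  have hr1 : r < 1 := by rw [hr]; linarith
  apply hasDerivAt_tsum_of_isPreconnected
    (u := fun n : ℕ => C * ((n : ℝ) * r ^ (n - 1)))
    (((summable_nps hr0 hr1).mul_left C)) (Metric.isOpen_ball (x := (0:ℝ)) (ε := r))
    ((convex_ball (0:ℝ) r).isPreconnected)
    (g' := fun n y => a n * ((n : ℝ) * y ^ (n - 1)))
  · intro n y _
    exact (hasDerivAt_pow n y).const_mul (a n)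
  · intro n y hy
    have hyr : |y| ≤ r := le_of_lt (by simpa [Real.norm_eq_abs] using hy)
    rw [Real.norm_eq_abs, abs_mul, abs_mul, abs_pow]
    have h1 : |(n:ℝ)| = (n:ℝ) := abs_of_nonneg (Nat.cast_nonneg n)
    rw [h1]
    gcongr
    exact hC n
  · exact Metric.mem_ball_self ((abs_nonneg x).trans_lt hxr)
  · exact summable_ps hC (by simpa [Real.norm_eq_abs, abs_of_nonneg hr0] using hr1 : |(0:ℝ)| < 1)
  · simpa [Real.norm_eq_abs] using hxr

lemma tsum_n1 {a : ℕ → ℝ} {u : ℝ} (h1 : Summable (fun n => a n * u ^ n))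
    (h2 : Summable (fun n : ℕ => a n * ((n : ℝ) * u ^ (n - 1)))) :
    ∑' n : ℕ, ((n : ℝ) + 1) * a n * u ^ n =
      (∑' n : ℕ, a n * u ^ n) + u * ∑' n : ℕ, a n * ((n : ℝ) * u ^ (n - 1)) := by
  have hterm : ∀ n : ℕ, ((n : ℝ) + 1) * a n * u ^ n =
      a n * u ^ n + u * (a n * ((n : ℝ) * u ^ (n - 1))) := by
    intro n
    cases n with
    | zero => simp
    | succ m => push_cast [Nat.add_sub_cancel]; ring
  calc ∑' n : ℕ, ((n : ℝ) + 1) * a n * u ^ n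
      = ∑' n : ℕ, (a n * u ^ n + u * (a n * ((n : ℝ) * u ^ (n - 1)))) := by
        exact tsum_congr hterm
    _ = (∑' n : ℕ, a n * u ^ n) + ∑' n : ℕ, u * (a n * ((n : ℝ) * u ^ (n - 1))) :=
        Summable.tsum_add h1 (h2.mul_left u)
    _ = (∑' n : ℕ, a n * u ^ n) + u * ∑' n : ℕ, a n * ((n : ℝ) * u ^ (n - 1)) := by
        rw [tsum_mul_left]

set_option maxHeartbeats 2000000 in
theorem stmt8 (s ρ q : ℝ) (hs : 0 < s) (hρ : 0 < ρ) (hq : q ∈ Set.Ioo (0:ℝ) 1)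
    (hstab : ρ + q < 1) (e : ℕ → ℕ → ℝ)
    (hbound : ∀ n b : ℕ, 1 ≤ b → e n b ∈ Set.Icc (0:ℝ) 1)
    (hrec : ∀ n b : ℕ, 1 ≤ b →
      (s + ρ + 1) * ((n : ℝ) + b) * e n b =
        ((if 2 ≤ b then (b : ℝ) * e n (b - 1) else 0) + (if b = 1 then 1 else 0))
        + (n : ℝ) * (if n = 0 then 0 else e (n - 1) b)
        + ρ * ((n : ℝ) + b) * (1 - q) * ∑' m : ℕ, q ^ m * e (n + m + 1) b) :
    ∀ u ∈ Set.Ioo q 1,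
      (u * (u ^ 2 - (s + 1 + ρ + q) * u + s * q + ρ + q) / (u - q)) *
          deriv (fun x => ∑' n : ℕ, e n 1 * x ^ n) u
        + (u - (1 + ρ + s)) * (∑' n : ℕ, e n 1 * u ^ n)
        + ρ * (1 - q) * ((∑' n : ℕ, e n 1 * u ^ n) - (∑' n : ℕ, e n 1 * q ^ n)) / (u - q)
        - u * ρ * (1 - q) * ((∑' n : ℕ, e n 1 * u ^ n) - (∑' n : ℕ, e n 1 * q ^ n)) / (u - q) ^ 2
        + 1 / (1 - u) = 0 := by
  obtain ⟨hq0, hq1⟩ := hq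
  intro u hu
  obtain ⟨hqu, hu1⟩ := hu
  have hu0 : 0 < u := hq0.trans hqu
  have huq : u - q ≠ 0 := sub_ne_zero.2 (ne_of_gt hqu)
  have h1u : 1 - u ≠ 0 := sub_ne_zero.2 (ne_of_gt hu1)
  have habs_u : |u| < 1 := by rw [abs_of_pos hu0]; exact hu1
  have habs_q : |q| < 1 := by rw [abs_of_pos hq0]; exact hq1
  -- basic bounds on e
  have he : ∀ n, |e n 1| ≤ 1 := by
    intro n
    obtain ⟨h1, h2⟩ := hbound n 1 le_rfl
    rw [abs_le]; constructor <;> linarith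
  -- the tail sums T n
  set T : ℕ → ℝ := fun n => ∑' m : ℕ, q ^ m * e (n + m + 1) 1 with hTdef
  have hTsummable : ∀ n, Summable (fun m : ℕ => q ^ m * e (n + m + 1) 1) := by
    intro n
    exact (summable_ps (a := fun m => e (n + m + 1) 1) (C := 1) (fun m => he _) habs_q).congr
      (fun m => by ring)
  have hT : ∀ n, |T n| ≤ (1 - q)⁻¹ := by
    intro n
    have h0 : 0 ≤ T n := tsum_nonneg (fun m => mul_nonneg (by positivity) (hbound _ 1 le_rfl).1)
    rw [abs_of_nonneg h0, hTdef]
    calc (∑' m : ℕ, q ^ m * e (n + m + 1) 1) ≤ ∑' m : ℕ, q ^ m := by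
          apply Summable.tsum_le_tsum _ (hTsummable n) (summable_geometric_of_lt_one hq0.le hq1)
          intro m
          nth_rewrite 2 [← mul_one (q ^ m)]
          exact mul_le_mul_of_nonneg_left (hbound _ 1 le_rfl).2 (by positivity)
      _ = (1 - q)⁻¹ := tsum_geometric_of_lt_one hq0.le hq1
  have hTrec : ∀ n, T n = e (n + 1) 1 + q * T (n + 1) := by
    intro n
    have h1 : T n = ∑' m : ℕ, q ^ m * e (n + m + 1) 1 := rfl
    rw [h1, Summable.tsum_eq_zero_add (hTsummable n)]
    have h2 : ∀ m : ℕ, q ^ (m + 1) * e (n + (m + 1) + 1) 1 =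
        q * (q ^ m * e ((n + 1) + m + 1) 1) := by
      intro m
      rw [pow_succ]
      ring_nf
    rw [tsum_congr h2, tsum_mul_left]
    have h3 : (∑' m : ℕ, q ^ m * e ((n + 1) + m + 1) 1) = T (n + 1) := rfl
    rw [h3]
    simp
  -- derivative of E
  have hE'u : HasDerivAt (fun x => ∑' n : ℕ, e n 1 * x ^ n)
      (∑' n : ℕ, e n 1 * ((n : ℝ) * u ^ (n - 1))) u := hasDerivAt_ps (fun n => he n) habs_u
  set Ed : ℝ := ∑' n : ℕ, e n 1 * ((n : ℝ) * u ^ (n - 1)) with hEd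
  set E : ℝ := ∑' n : ℕ, e n 1 * u ^ n with hE
  set Q : ℝ := ∑' n : ℕ, e n 1 * q ^ n with hQ
  set Du : ℝ := ∑' n : ℕ, T n * u ^ n with hDu
  set Dd : ℝ := ∑' n : ℕ, T n * ((n : ℝ) * u ^ (n - 1)) with hDd
  have hq_T0 : q * T 0 = Q - e 0 1 := by
    have h1 : q * T 0 = ∑' m : ℕ, e (m + 1) 1 * q ^ (m + 1) := by
      rw [show T 0 = ∑' m : ℕ, q ^ m * e (0 + m + 1) 1 from rfl, ← tsum_mul_left]
      apply tsum_congr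
      intro m
      rw [pow_succ]
      ring_nf
    have h2 : Summable (fun n : ℕ => e n 1 * q ^ n) := summable_ps he habs_q
    have h3 := Summable.tsum_eq_zero_add h2
    rw [h1]
    rw [hQ, h3]
    simp
  -- key identity for D on the unit interval
  have hkey : ∀ x : ℝ, |x| < 1 → (x - q) * (∑' n : ℕ, T n * x ^ n) =
      (∑' n : ℕ, e n 1 * x ^ n) - Q := by
    intro x hx
    have hsx : Summable (fun n : ℕ => e n 1 * x ^ n) := summable_ps he hx
    have hTx : Summable (fun n : ℕ => T n * x ^ n) := summable_ps hT hx
    have hsx1 : Summable (fun n : ℕ => e (n + 1) 1 * x ^ (n + 1)) :=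
      (summable_nat_add_iff (f := fun n : ℕ => e n 1 * x ^ n) 1).2 hsx
    have hTx1 : Summable (fun n : ℕ => T (n + 1) * x ^ (n + 1)) :=
      (summable_nat_add_iff (f := fun n : ℕ => T n * x ^ n) 1).2 hTx
    have h1 : x * (∑' n : ℕ, T n * x ^ n) = ∑' n : ℕ, T n * x ^ (n + 1) := by
      rw [← tsum_mul_left]
      exact tsum_congr (fun n => by ring)
    have h3 : (∑' n : ℕ, T n * x ^ (n + 1)) =
        (∑' n : ℕ, e (n + 1) 1 * x ^ (n + 1)) + ∑' n : ℕ, q * (T (n + 1) * x ^ (n + 1)) := by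
      rw [← Summable.tsum_add hsx1 (hTx1.mul_left q)]
      apply tsum_congr
      intro n
      rw [hTrec n]
      ring
    have h4 : (∑' n : ℕ, e (n + 1) 1 * x ^ (n + 1)) = (∑' n : ℕ, e n 1 * x ^ n) - e 0 1 := by
      have := Summable.tsum_eq_zero_add hsx
      simp only [pow_zero, mul_one] at this
      linarith
    have h5 : (∑' n : ℕ, q * (T (n + 1) * x ^ (n + 1))) =
        q * ((∑' n : ℕ, T n * x ^ n) - T 0) := by
      rw [tsum_mul_left]
      have := Summable.tsum_eq_zero_add hTx
      simp only [pow_zero, mul_one] at this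
      rw [this]
      ring
    have h6 := hq_T0
    linear_combination h1 + h3 + h4 + h5 - h6
  have R2 : (u - q) * Du = E - Q := hkey u habs_u
  have hD'u : HasDerivAt (fun x => ∑' n : ℕ, T n * x ^ n) Dd u := hasDerivAt_ps hT habs_u
  have R3 : Du + (u - q) * Dd = Ed := by
    have hf : HasDerivAt (fun x => (x - q) * (∑' n : ℕ, T n * x ^ n))
        (1 * Du + (u - q) * Dd) u := ((hasDerivAt_id u).sub_const q).mul hD'u
    have hg : HasDerivAt (fun x => (∑' n : ℕ, e n 1 * x ^ n) - Q) Ed u := hE'u.sub_const Q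
    have hmem : Metric.ball (0:ℝ) 1 ∈ nhds u :=
      Metric.isOpen_ball.mem_nhds (Metric.mem_ball.2 (by simpa [Real.dist_eq] using habs_u))
    have heqev : (fun x => (∑' n : ℕ, e n 1 * x ^ n) - Q) =ᶠ[nhds u]
        (fun x => (x - q) * (∑' n : ℕ, T n * x ^ n)) := by
      filter_upwards [hmem] with x hx
      exact (hkey x (by simpa [Real.dist_eq] using Metric.mem_ball.1 hx)).symm
    have hf' : HasDerivAt (fun x => (∑' n : ℕ, e n 1 * x ^ n) - Q)
        (1 * Du + (u - q) * Dd) u := hf.congr_of_eventuallyEq heqev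
    have := hf'.unique hg
    linarith
  -- summability facts at u
  have hsE : Summable (fun n : ℕ => e n 1 * u ^ n) := summable_ps he habs_u
  have hsEd : Summable (fun n : ℕ => e n 1 * ((n : ℝ) * u ^ (n - 1))) := summable_dps he habs_u
  have hsT : Summable (fun n : ℕ => T n * u ^ n) := summable_ps hT habs_u
  have hsTd : Summable (fun n : ℕ => T n * ((n : ℝ) * u ^ (n - 1))) := summable_dps hT habs_u
  have S1 : Summable (fun n : ℕ => ((n : ℝ) + 1) * e n 1 * u ^ n) := summable_n1ps he habs_u
  have S4 : Summable (fun n : ℕ => ((n : ℝ) + 1) * T n * u ^ n) := summable_n1ps hT habs_u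
  have S3 : Summable (fun n : ℕ => u ^ n) := summable_geometric_of_lt_one hu0.le hu1
  have S2 : Summable (fun n : ℕ => (n : ℝ) * (if n = 0 then 0 else e (n - 1) 1) * u ^ n) := by
    apply Summable.of_norm_bounded (g := fun n : ℕ => ((n : ℝ) + 1) * 1 * |u| ^ n)
      (summable_n1ps (a := fun _ : ℕ => (1:ℝ)) (C := 1) (fun _ => by simp) (by rwa [abs_abs]))
    intro n
    rw [Real.norm_eq_abs, abs_mul, abs_mul, abs_pow, mul_one,
      abs_of_nonneg (Nat.cast_nonneg (α := ℝ) n)]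
    have h1 : |if n = 0 then (0:ℝ) else e (n - 1) 1| ≤ 1 := by
      split
      · simp
      · exact he _
    have h2 : (0:ℝ) ≤ |u| ^ n := by positivity
    have h3 : (n : ℝ) * |if n = 0 then (0:ℝ) else e (n - 1) 1| ≤ (n : ℝ) + 1 := by
      nlinarith [Nat.cast_nonneg (α := ℝ) n, abs_nonneg (if n = 0 then (0:ℝ) else e (n - 1) 1)]
    nlinarith [mul_le_mul_of_nonneg_right h3 h2]
  -- pointwise recurrence at b = 1 times u^n
  have heqn : ∀ n : ℕ, (s + ρ + 1) * (((n : ℝ) + 1) * e n 1 * u ^ n) =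
      u ^ n + ((n : ℝ) * (if n = 0 then 0 else e (n - 1) 1) * u ^ n)
        + (ρ * (1 - q)) * (((n : ℝ) + 1) * T n * u ^ n) := by
    intro n
    have h := hrec n 1 le_rfl
    have hTn : T n = ∑' m : ℕ, q ^ m * e (n + m + 1) 1 := rfl
    rw [← hTn] at h
    by_cases hn : n = 0
    · subst hn; norm_num at h ⊢; linear_combination h
    · simp only [if_neg hn] at h ⊢
      norm_num at h
      linear_combination u ^ n * h
  -- master equation
  have R1 : (s + ρ + 1) * (E + u * Ed) =
      (1 - u)⁻¹ + u * (E + u * Ed) + ρ * (1 - q) * (Du + u * Dd) := by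
    have hA2 : (∑' n : ℕ, (n : ℝ) * (if n = 0 then 0 else e (n - 1) 1) * u ^ n)
        = u * (E + u * Ed) := by
      rw [Summable.tsum_eq_zero_add S2]
      have hterm : ∀ n : ℕ, ((n + 1 : ℕ) : ℝ) * (if n + 1 = 0 then 0 else e (n + 1 - 1) 1)
          * u ^ (n + 1) = u * (((n : ℝ) + 1) * e n 1 * u ^ n) := by
        intro n
        simp only [Nat.add_sub_cancel, if_neg (Nat.succ_ne_zero n)]
        push_cast
        ring
      rw [tsum_congr hterm, tsum_mul_left]
      simp only [Nat.cast_zero, zero_mul, if_pos rfl, mul_zero, zero_add]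
      rw [tsum_n1 hsE hsEd]
    calc (s + ρ + 1) * (E + u * Ed)
        = (s + ρ + 1) * ∑' n : ℕ, ((n : ℝ) + 1) * e n 1 * u ^ n := by
          rw [tsum_n1 hsE hsEd]
      _ = ∑' n : ℕ, (s + ρ + 1) * (((n : ℝ) + 1) * e n 1 * u ^ n) := by rw [tsum_mul_left]
      _ = ∑' n : ℕ, (u ^ n + ((n : ℝ) * (if n = 0 then 0 else e (n - 1) 1) * u ^ n)
            + (ρ * (1 - q)) * (((n : ℝ) + 1) * T n * u ^ n)) := tsum_congr heqn
      _ = (∑' n : ℕ, u ^ n) + (∑' n : ℕ, (n : ℝ) * (if n = 0 then 0 else e (n - 1) 1) * u ^ n)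
            + (ρ * (1 - q)) * ∑' n : ℕ, ((n : ℝ) + 1) * T n * u ^ n := by
          rw [Summable.tsum_add (S3.add S2) (S4.mul_left _), Summable.tsum_add S3 S2, tsum_mul_left]
      _ = (1 - u)⁻¹ + u * (E + u * Ed) + ρ * (1 - q) * (Du + u * Dd) := by
          rw [tsum_geometric_of_lt_one hu0.le hu1, hA2, tsum_n1 hsT hsTd]
  -- final algebra
  rw [hE'u.deriv]
  rw [show (1:ℝ) / (1 - u) = (1 - u)⁻¹ from one_div _]
  have hmain : u * (u ^ 2 - (s + 1 + ρ + q) * u + s * q + ρ + q) * (u - q) * Ed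
      + (u - (1 + ρ + s)) * (u - q) ^ 2 * E + ρ * (1 - q) * (u - q) * (E - Q)
      - u * ρ * (1 - q) * (E - Q) + (u - q) ^ 2 * (1 - u)⁻¹ = 0 := by
    linear_combination (-(u - q) ^ 2) * R1 + (ρ * (1 - q) * q) * R2
      + (-(ρ * (1 - q) * u * (u - q))) * R3
  have hcancel : (1 - u) * (1 - u)⁻¹ = 1 := mul_inv_cancel₀ h1u
  have hmain2 : (1 - u) * (u * (u ^ 2 - (s + 1 + ρ + q) * u + s * q + ρ + q) * (u - q) * Ed
      + (u - (1 + ρ + s)) * (u - q) ^ 2 * E + ρ * (1 - q) * (u - q) * (E - Q)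
      - u * ρ * (1 - q) * (E - Q)) + (u - q) ^ 2 = 0 := by
    linear_combination (1 - u) * hmain - (u - q) ^ 2 * hcancel
  field_simp [huq, h1u]
  linear_combination hmain2
end
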